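/- arXiv:2305.19277 — 2 statements merged into one kernel-verified Lean document; each statement's English description precedes it below -/
import Mathlib

section
/- Let G be a starlike graph with clique partition (V_0, V_1, …, V_t). Then every m-convexly independent set S of G satisfies |S| ≤ max over i ∈ {0, 1, …, t} of (|X_i| + d_c(G_i)). -/
open SimpleGraph

variable {V : Type*}

/-- The closed neighborhood of a vertex. -/
def closedNbhd (G : SimpleGraph V) (v : V) : Set V := insert v (G.neighborSet v)

/-- A vertex is simplicial if its closed neighborhood induces a complete graph. -/
def IsSimplicial (G : SimpleGraph V) (v : V) : Prop :=
  ∀ a ∈ closedNbhd G v, ∀ b ∈ closedNbhd G v, a ≠ b → G.Adj a b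

/-- `Z`, the set of simplicial vertices of `G`. -/
def simplicialSet (G : SimpleGraph V) : Set V := {v | IsSimplicial G v}

/-- `N(T)`, the union of open neighborhoods of vertices of `T`. -/
def nbhdSet (G : SimpleGraph V) (T : Set V) : Set V := ⋃ v ∈ T, G.neighborSet v

/-- An independent set of vertices. -/
def IsIndepSet' (G : SimpleGraph V) (T : Set V) : Prop :=
  ∀ u ∈ T, ∀ v ∈ T, ¬ G.Adj u v

/-- The difference `d(T) = |T| - |N(T)|` of a set of vertices. -/
noncomputable def indepDiff (G : SimpleGraph V) (T : Set V) : ℤ :=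
  (T.ncard : ℤ) - ((nbhdSet G T).ncard : ℤ)

/-- The critical independence difference `d_c(G)`. -/
noncomputable def critIndepDiff (G : SimpleGraph V) : ℤ :=
  sSup {d : ℤ | ∃ T : Set V, IsIndepSet' G T ∧ d = indepDiff G T}

/-- A walk is an induced path if it is a path and no two non-consecutive vertices
of it are adjacent. -/
def IsInducedPath (G : SimpleGraph V) {a b : V} (p : G.Walk a b) : Prop :=
  p.IsPath ∧ ∀ (i j : ℕ) (hi : i < p.support.length) (hj : j < p.support.length),
    i + 1 < j → ¬ G.Adj (p.support.get ⟨i, hi⟩) (p.support.get ⟨j, hj⟩)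

/-- A set is monophonically convex if it contains every vertex of every induced path
joining two of its vertices. -/
def MonoConvex (G : SimpleGraph V) (S : Set V) : Prop :=
  ∀ ⦃a b : V⦄, a ∈ S → b ∈ S → ∀ p : G.Walk a b, IsInducedPath G p →
    ∀ w ∈ p.support, w ∈ S

/-- The monophonic convex hull of `S`: the smallest monophonically convex set containing `S`. -/
def monoHull (G : SimpleGraph V) (S : Set V) : Set V :=
  ⋂₀ {T : Set V | S ⊆ T ∧ MonoConvex G T}

/-- A set is monophonically convexly independent if no member is in the hull
of the others. -/
def MConvexIndep (G : SimpleGraph V) (S : Set V) : Prop :=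
  ∀ v ∈ S, v ∉ monoHull G (S \ {v})

/-- The monophonic rank: the largest size of an m-convexly independent set. -/
noncomputable def monoRank (G : SimpleGraph V) : ℕ :=
  sSup {n : ℕ | ∃ S : Set V, MConvexIndep G S ∧ n = S.ncard}

/-- A starlike partition of a graph: a partition of the vertex set into cliques
`V_0, V_1, …, V_t` such that `V_0` is a maximal clique and, for `i ≥ 1`,
all vertices of `V_i` have the same closed neighborhood outside `V_i`,
contained in `V_0`. -/
structure IsStarlikePartition (G : SimpleGraph V) (t : ℕ) (Vp : Fin (t+1) → Set V) : Prop where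
  nonempty : ∀ i, (Vp i).Nonempty
  disjoint : ∀ i j, i ≠ j → Disjoint (Vp i) (Vp j)
  covers : ∀ v : V, ∃ i, v ∈ Vp i
  cliques : ∀ i, G.IsClique (Vp i)
  maximal : ∀ T : Set V, G.IsClique T → Vp 0 ⊆ T → T ⊆ Vp 0
  nbhd_eq : ∀ i : Fin (t+1), i ≠ 0 → ∀ u ∈ Vp i, ∀ v ∈ Vp i,
    closedNbhd G u \ Vp i = closedNbhd G v \ Vp i
  nbhd_sub : ∀ i : Fin (t+1), i ≠ 0 → ∀ u ∈ Vp i, closedNbhd G u \ Vp i ⊆ Vp 0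

/-- `X_i`: the maximal clique containing `V_i` (`X_0 = V_0`; for `i ≥ 1` it is
the closed neighborhood of any vertex of `V_i`). -/
def Xset (G : SimpleGraph V) {t : ℕ} (Vp : Fin (t+1) → Set V) (i : Fin (t+1)) : Set V :=
  if i = 0 then Vp 0 else ⋃ u ∈ Vp i, closedNbhd G u

/-- `C_i = X_i ∩ Z`. -/
def Cset (G : SimpleGraph V) {t : ℕ} (Vp : Fin (t+1) → Set V) (i : Fin (t+1)) : Set V :=
  Xset G Vp i ∩ simplicialSet G

/-- `C'_i = X_i − C_i`. -/
def Cset' (G : SimpleGraph V) {t : ℕ} (Vp : Fin (t+1) → Set V) (i : Fin (t+1)) : Set V :=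
  Xset G Vp i \ Cset G Vp i

/-- `Y_i`: the union of the sets `C_j`, over `j ≠ i` with `C'_j ⊆ C'_i`. -/
def Yset (G : SimpleGraph V) {t : ℕ} (Vp : Fin (t+1) → Set V) (i : Fin (t+1)) : Set V :=
  ⋃ j ∈ {j : Fin (t+1) | j ≠ i ∧ Cset' G Vp j ⊆ Cset' G Vp i}, Cset G Vp j

open scoped Classical in
/-- The vertex set of the split graph `G_i`: if `|N(Y_i) − Y_i| = |C'_i| − 1` and
`|Y_i| ≥ |C'_i| − 1` then `(C'_i − {x}) ∪ Y_i` where `{x} = C'_i − N(Y_i)`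
(so that `C'_i − {x} = C'_i ∩ N(Y_i)`), otherwise `C'_i ∪ Y_i`. -/
noncomputable def Wset (G : SimpleGraph V) {t : ℕ} (Vp : Fin (t+1) → Set V)
    (i : Fin (t+1)) : Set V :=
  if (((nbhdSet G (Yset G Vp i) \ Yset G Vp i).ncard : ℤ) = ((Cset' G Vp i).ncard : ℤ) - 1
      ∧ ((Yset G Vp i).ncard : ℤ) ≥ ((Cset' G Vp i).ncard : ℤ) - 1)
  then (Cset' G Vp i ∩ nbhdSet G (Yset G Vp i)) ∪ Yset G Vp i
  else Cset' G Vp i ∪ Yset G Vp i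

/-- The induced subgraph on `W` with all edges inside `Y` deleted. -/
def inducedMinusY (G : SimpleGraph V) (W Y : Set V) : SimpleGraph ↥W where
  Adj a b := G.Adj a b ∧ ¬((a : V) ∈ Y ∧ (b : V) ∈ Y)
  symm := by
    constructor
    intro a b h
    exact ⟨h.1.symm, fun hc => h.2 ⟨hc.2, hc.1⟩⟩
  loopless := by
    constructor
    intro a h
    exact h.1.ne rfl

/-- The split graph `G_i = G[W_i] − E(G[Y_i])`. -/
noncomputable def Gsplit (G : SimpleGraph V) {t : ℕ} (Vp : Fin (t+1) → Set V)
    (i : Fin (t+1)) : SimpleGraph ↥(Wset G Vp i) :=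
  inducedMinusY G (Wset G Vp i) (Yset G Vp i)

section Aux
variable {G : SimpleGraph V} {S : Set V}

lemma mem_hull_of_induced_path {a b v : V}
    (ha : a ∈ S) (hb : b ∈ S) (hav : a ≠ v) (hbv : b ≠ v)
    (p : G.Walk a b) (hp : IsInducedPath G p) (hv : v ∈ p.support) :
    v ∈ monoHull G (S \ {v}) := by
  rw [monoHull, Set.mem_sInter]
  intro T hT
  exact hT.2 (hT.1 ⟨ha, hav⟩) (hT.1 ⟨hb, hbv⟩) p hp v hv

lemma mci_not_on_path (hS : MConvexIndep G S) {a b v : V}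
    (hv : v ∈ S) (ha : a ∈ S) (hb : b ∈ S) (hav : a ≠ v) (hbv : b ≠ v)
    (p : G.Walk a b) (hp : IsInducedPath G p) (hsup : v ∈ p.support) : False :=
  hS v hv (mem_hull_of_induced_path ha hb hav hbv p hp hsup)

lemma adj_of_two (hS : MConvexIndep G S) {a v b : V}
    (hv : v ∈ S) (ha : a ∈ S) (hb : b ∈ S) (hav : a ≠ v) (hbv : b ≠ v) (hab : a ≠ b)
    (h1 : G.Adj a v) (h2 : G.Adj v b) : G.Adj a b := by
  by_contra hn
  refine mci_not_on_path hS hv ha hb hav hbv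
    (Walk.cons h1 (Walk.cons h2 Walk.nil)) ⟨?_, ?_⟩ (by simp)
  · simp [Walk.isPath_def, h1.ne, h2.ne, hab]
  · intro i j hi hj hlt
    simp only [Walk.support_cons, Walk.support_nil, List.length_cons, List.length_nil] at hi hj
    have : i = 0 ∧ j = 2 := by omega
    obtain ⟨rfl, rfl⟩ := this
    simpa using hn

lemma four_path_false (hS : MConvexIndep G S) {e x y q : V}
    (he : e ∈ S) (hx : x ∈ S) (hq : q ∈ S)
    (h1 : G.Adj e x) (h2 : G.Adj x y) (h3 : G.Adj y q)
    (hey : ¬ G.Adj e y) (heq : ¬ G.Adj e q) (hxq : ¬ G.Adj x q)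
    (ney : e ≠ y) (neq : e ≠ q) (nxq : x ≠ q) : False := by
  refine mci_not_on_path hS hx he hq h1.ne (fun h => nxq h.symm)
    (Walk.cons h1 (Walk.cons h2 (Walk.cons h3 Walk.nil))) ⟨?_, ?_⟩ (by simp)
  · simp [Walk.isPath_def, h1.ne, h2.ne, h3.ne, ney, neq, nxq]
  · intro i j hi hj hlt
    simp only [Walk.support_cons, Walk.support_nil, List.length_cons, List.length_nil] at hi hj
    have : (i = 0 ∧ j = 2) ∨ (i = 0 ∧ j = 3) ∨ (i = 1 ∧ j = 3) := by omega
    rcases this with ⟨rfl, rfl⟩ | ⟨rfl, rfl⟩ | ⟨rfl, rfl⟩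
    · simpa using hey
    · simpa using heq
    · simpa using hxq

end Aux

section Struct
variable {G : SimpleGraph V} {t : ℕ} {Vp : Fin (t+1) → Set V}

lemma mem_closedNbhd_iff {u x : V} : x ∈ closedNbhd G u ↔ x = u ∨ G.Adj u x := by
  simp [closedNbhd, SimpleGraph.mem_neighborSet]

lemma simplicial_of_not_mem_V0 (hstar : IsStarlikePartition G t Vp) {v : V}
    (hv : v ∉ Vp 0) : IsSimplicial G v := by
  obtain ⟨i, hvi⟩ := hstar.covers v
  have hi : i ≠ 0 := by rintro rfl; exact hv hvi
  intro a ha b hb hab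
  by_cases haV : a ∈ Vp i <;> by_cases hbV : b ∈ Vp i
  · exact hstar.cliques i haV hbV hab
  · have hb' : b ∈ closedNbhd G a \ Vp i := by
      rw [hstar.nbhd_eq i hi a haV v hvi]; exact ⟨hb, hbV⟩
    rcases mem_closedNbhd_iff.mp hb'.1 with rfl | h
    · exact absurd rfl hab.symm
    · exact h
  · have ha' : a ∈ closedNbhd G b \ Vp i := by
      rw [hstar.nbhd_eq i hi b hbV v hvi]; exact ⟨ha, haV⟩
    rcases mem_closedNbhd_iff.mp ha'.1 with rfl | h
    · exact absurd rfl hab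
    · exact h.symm
  · have ha' : a ∈ Vp 0 := hstar.nbhd_sub i hi v hvi ⟨ha, haV⟩
    have hb' : b ∈ Vp 0 := hstar.nbhd_sub i hi v hvi ⟨hb, hbV⟩
    exact hstar.cliques 0 ha' hb' hab

lemma Xset_zero : Xset G Vp 0 = Vp 0 := by rw [Xset, if_pos rfl]

lemma Xset_eq_closedNbhd (hstar : IsStarlikePartition G t Vp) {i : Fin (t+1)}
    (hi : i ≠ 0) {u : V} (hu : u ∈ Vp i) : Xset G Vp i = closedNbhd G u := by
  rw [Xset, if_neg hi]
  ext x
  constructor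
  · intro hx
    obtain ⟨w, hw, hxw⟩ := Set.mem_iUnion₂.mp hx
    by_cases hxV : x ∈ Vp i
    · rcases eq_or_ne x u with rfl | hne
      · exact mem_closedNbhd_iff.mpr (Or.inl rfl)
      · exact mem_closedNbhd_iff.mpr (Or.inr (hstar.cliques i hu hxV hne.symm))
    · have : x ∈ closedNbhd G u \ Vp i := by
        rw [hstar.nbhd_eq i hi u hu w hw]; exact ⟨hxw, hxV⟩
      exact this.1
  · intro hx
    exact Set.mem_iUnion₂.mpr ⟨u, hu, hx⟩

lemma mem_Xset_self (hstar : IsStarlikePartition G t Vp) {i : Fin (t+1)}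
    {u : V} (hu : u ∈ Vp i) : u ∈ Xset G Vp i := by
  rcases eq_or_ne i 0 with rfl | hi
  · rwa [Xset_zero]
  · rw [Xset_eq_closedNbhd hstar hi hu]; exact mem_closedNbhd_iff.mpr (Or.inl rfl)

lemma adj_mem_or (hstar : IsStarlikePartition G t Vp) {k : Fin (t+1)} (hk : k ≠ 0)
    {e w : V} (he : e ∈ Vp k) (hadj : G.Adj e w) : w ∈ Vp k ∨ w ∈ Vp 0 := by
  by_cases hw : w ∈ Vp k
  · exact Or.inl hw
  · exact Or.inr (hstar.nbhd_sub k hk e he ⟨mem_closedNbhd_iff.mpr (Or.inr hadj), hw⟩)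

lemma simplicial_V0_no_outside (hstar : IsStarlikePartition G t Vp) {p w : V}
    (hp : p ∈ Vp 0) (hps : IsSimplicial G p) (hw : w ∉ Vp 0) (hadj : G.Adj p w) : False := by
  have hcl : G.IsClique (insert w (Vp 0)) := by
    intro a ha b hb hne
    have hmem : ∀ c ∈ insert w (Vp 0), c ∈ closedNbhd G p := by
      intro c hc
      rcases Set.mem_insert_iff.mp hc with rfl | hc0
      · exact mem_closedNbhd_iff.mpr (Or.inr hadj)
      · rcases eq_or_ne c p with rfl | hne'
        · exact mem_closedNbhd_iff.mpr (Or.inl rfl)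
        · exact mem_closedNbhd_iff.mpr (Or.inr (hstar.cliques 0 hp hc0 hne'.symm))
    exact hps a (hmem a ha) b (hmem b hb) hne
  exact hw (hstar.maximal _ hcl (Set.subset_insert _ _) (Set.mem_insert _ _))

lemma Cset'_subset_zero (hstar : IsStarlikePartition G t Vp) (j : Fin (t+1)) :
    Cset' G Vp j ⊆ Cset' G Vp 0 := by
  intro x hx
  have hxZ : x ∉ simplicialSet G := fun h => hx.2 ⟨hx.1, h⟩
  have hxV0 : x ∈ Vp 0 := by
    by_contra h
    exact hxZ (simplicial_of_not_mem_V0 hstar h)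
  refine ⟨by rwa [Xset_zero], fun h => hxZ h.2⟩

lemma mem_Cset (hstar : IsStarlikePartition G t Vp) {m : Fin (t+1)} {q : V}
    (hq : q ∈ Vp m) (hqZ : IsSimplicial G q) : q ∈ Cset G Vp m :=
  ⟨mem_Xset_self hstar hq, hqZ⟩

lemma Yset_subset_Wset (i : Fin (t+1)) : Yset G Vp i ⊆ Wset G Vp i := by
  classical
  rw [Wset]
  split_ifs <;> exact Set.subset_union_right

lemma Wset_diff_subset (i : Fin (t+1)) : Wset G Vp i \ Yset G Vp i ⊆ Cset' G Vp i := by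
  classical
  rw [Wset]
  split_ifs with h
  · rintro x ⟨hx, hxY⟩
    rcases hx with hx | hx
    · exact hx.1
    · exact absurd hx hxY
  · rintro x ⟨hx, hxY⟩
    rcases hx with hx | hx
    · exact hx
    · exact absurd hx hxY

end Struct

section Count
variable {G : SimpleGraph V} {t : ℕ} {Vp : Fin (t+1) → Set V}

lemma ncard_Xset_split [Fintype V] (G : SimpleGraph V) (Vp : Fin (t+1) → Set V)
    (i : Fin (t+1)) :
    (Xset G Vp i).ncard = (Cset G Vp i).ncard + (Cset' G Vp i).ncard := by
  have h1 : Cset G Vp i ∪ Cset' G Vp i = Xset G Vp i :=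
    Set.union_diff_cancel (Set.inter_subset_left)
  have hd : Disjoint (Cset G Vp i) (Cset' G Vp i) := Set.disjoint_sdiff_right
  rw [← h1, Set.ncard_union_eq hd (Set.toFinite _) (Set.toFinite _)]

lemma main_count [Fintype V] (G : SimpleGraph V) (Vp : Fin (t+1) → Set V)
    (S A B T'' : Set V) (i : Fin (t+1))
    (hcov : S = A ∪ B ∪ T'')
    (hdAB : Disjoint A B) (hdAT : Disjoint A T'') (hdBT : Disjoint B T'')
    (hA : A ⊆ Cset' G Vp i) (hB : B ⊆ Cset G Vp i) (hT : T'' ⊆ Yset G Vp i)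
    (hnbr : ∀ q ∈ T'', ∀ w, G.Adj q w → w ∉ A) :
    (S.ncard : ℤ) ≤ ((Xset G Vp i).ncard : ℤ) + critIndepDiff (Gsplit G Vp i) := by
  classical
  set W := Wset G Vp i with hW
  set Y := Yset G Vp i with hY
  have hTW : T'' ⊆ W := hT.trans (Yset_subset_Wset i)
  set T' : Set ↥W := Subtype.val ⁻¹' T'' with hT'
  have hval : Subtype.val '' T' = T'' := by
    rw [hT', Subtype.image_preimage_coe]
    exact Set.inter_eq_self_of_subset_right hTW
  have hcardT : T'.ncard = T''.ncard := by
    rw [← hval, Set.ncard_image_of_injective _ Subtype.val_injective]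
  set N : Set ↥W := nbhdSet (Gsplit G Vp i) T' with hN
  set N' : Set V := Subtype.val '' N with hN'
  have hcardN : N'.ncard = N.ncard :=
    Set.ncard_image_of_injective _ Subtype.val_injective
  -- properties of N'
  have hN'prop : ∀ w ∈ N', w ∈ Cset' G Vp i ∧ w ∉ A := by
    rintro w ⟨w', hw', rfl⟩
    rw [hN, nbhdSet] at hw'
    obtain ⟨v, hv, hadj⟩ := Set.mem_iUnion₂.mp hw'
    have hadj' : G.Adj ↑v ↑w' ∧ ¬((↑v : V) ∈ Y ∧ (↑w' : V) ∈ Y) := hadj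
    have hvT : (↑v : V) ∈ T'' := hv
    have hw'Y : (↑w' : V) ∉ Y := fun h => hadj'.2 ⟨hT hvT, h⟩
    refine ⟨Wset_diff_subset i ⟨w'.2, hw'Y⟩, hnbr _ hvT _ hadj'.1⟩
  have hindep : IsIndepSet' (Gsplit G Vp i) T' := by
    intro u hu v hv hadj
    exact hadj.2 ⟨hT hu, hT hv⟩
  -- critIndepDiff bound
  have hcrit : indepDiff (Gsplit G Vp i) T' ≤ critIndepDiff (Gsplit G Vp i) := by
    apply le_csSup
    · refine ⟨((Set.univ : Set ↥W).ncard : ℤ), ?_⟩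
      rintro d ⟨U, _, rfl⟩
      have h1 : U.ncard ≤ (Set.univ : Set ↥W).ncard :=
        Set.ncard_le_ncard (Set.subset_univ _) (Set.toFinite _)
      have h2 : (0:ℤ) ≤ ((nbhdSet (Gsplit G Vp i) U).ncard : ℤ) := by positivity
      rw [indepDiff]
      omega
    · exact ⟨T', hindep, rfl⟩
  have hdiff : indepDiff (Gsplit G Vp i) T' = (T''.ncard : ℤ) - (N'.ncard : ℤ) := by
    rw [indepDiff, hcardT, hcardN]
  -- cardinalities
  have hScard : S.ncard = A.ncard + B.ncard + T''.ncard := by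
    rw [hcov, Set.ncard_union_eq (by
      exact Set.disjoint_union_left.mpr ⟨hdAT, hdBT⟩) (Set.toFinite _) (Set.toFinite _),
      Set.ncard_union_eq hdAB (Set.toFinite _) (Set.toFinite _)]
  have hAN : A.ncard + N'.ncard ≤ (Cset' G Vp i).ncard := by
    have hdisj : Disjoint A N' := by
      rw [Set.disjoint_right]
      intro w hw
      exact (hN'prop w hw).2
    rw [← Set.ncard_union_eq hdisj (Set.toFinite _) (Set.toFinite _)]
    exact Set.ncard_le_ncard (Set.union_subset hA (fun w hw => (hN'prop w hw).1))
      (Set.toFinite _)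
  have hBC : B.ncard ≤ (Cset G Vp i).ncard := Set.ncard_le_ncard hB (Set.toFinite _)
  have hX := ncard_Xset_split G Vp i
  rw [hScard, hX]
  have := hcrit
  rw [hdiff] at this
  push_cast
  omega

end Count

/-- every m-convexly independent set `S` of a starlike graph satisfies
`|S| ≤ max_i (|X_i| + d_c(G_i))`. -/
theorem statement5 [Fintype V] (G : SimpleGraph V) (t : ℕ) (Vp : Fin (t+1) → Set V)
    (hstar : IsStarlikePartition G t Vp) (S : Set V) (hS : MConvexIndep G S) :
    (S.ncard : ℤ) ≤
      Finset.univ.sup' Finset.univ_nonempty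
        (fun i : Fin (t+1) =>
          ((Xset G Vp i).ncard : ℤ) + critIndepDiff (Gsplit G Vp i)) := by
  classical
  set Z : Set V := simplicialSet G with hZdef
  set P : Set V := S ∩ Vp 0 with hPdef
  set Q : Set V := S \ Vp 0 with hQdef
  set Qe : Set V := {q ∈ Q | ∃ p ∈ P, G.Adj q p} with hQedef
  set Qt : Set V := Q \ Qe with hQtdef
  have hQsimp : ∀ q ∈ Q, IsSimplicial G q := fun q hq =>
    simplicial_of_not_mem_V0 hstar hq.2
  rcases Set.eq_empty_or_nonempty Qe with hQe | ⟨e₀, he₀⟩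
  · -- Case I : Qe = ∅, use index 0
    refine le_trans ?_ (Finset.le_sup' _ (Finset.mem_univ (0 : Fin (t+1))))
    apply main_count G Vp S (P \ Z) (P ∩ Z) Q 0
    · ext v
      constructor
      · intro hv
        by_cases h0 : v ∈ Vp 0
        · by_cases hz : v ∈ Z
          · exact Or.inl (Or.inr ⟨⟨hv, h0⟩, hz⟩)
          · exact Or.inl (Or.inl ⟨⟨hv, h0⟩, hz⟩)
        · exact Or.inr ⟨hv, h0⟩
      · rintro ((hv | hv) | hv)
        · exact hv.1.1
        · exact hv.1.1
        · exact hv.1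
    · exact Set.disjoint_left.mpr (fun x hx hx' => hx.2 hx'.2)
    · exact Set.disjoint_left.mpr (fun x hx hx' => hx'.2 hx.1.2)
    · exact Set.disjoint_left.mpr (fun x hx hx' => hx'.2 hx.1.2)
    · intro x hx
      exact ⟨by rw [Xset_zero]; exact hx.1.2, fun h => hx.2 h.2⟩
    · intro x hx
      exact ⟨by rw [Xset_zero]; exact hx.1.2, hx.2⟩
    · intro q hq
      obtain ⟨m, hqm⟩ := hstar.covers q
      have hm0 : m ≠ 0 := by rintro rfl; exact hq.2 hqm
      exact Set.mem_iUnion₂.mpr ⟨m, ⟨hm0, Cset'_subset_zero hstar m⟩,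
        mem_Cset hstar hqm (hQsimp q hq)⟩
    · intro q hq w hadj hw
      have : q ∈ Qe := ⟨hq, ⟨w, hw.1, hadj⟩⟩
      rw [hQe] at this
      exact this
  · -- Case II : e₀ ∈ Qe
    obtain ⟨k, he₀k⟩ := hstar.covers e₀
    have hk : k ≠ 0 := by rintro rfl; exact he₀.1.2 he₀k
    have hXk := Xset_eq_closedNbhd hstar hk he₀k
    obtain ⟨p₀, hp₀, hp₀adj⟩ := he₀.2
    have F1 : ∀ e ∈ Qe, ∀ p ∈ P, G.Adj e p := by
      rintro e ⟨heQ, pe, hpe, hadj⟩ p hp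
      rcases eq_or_ne p pe with rfl | hne
      · exact hadj
      · exact adj_of_two hS hpe.1 heQ.1 hp.1
          (fun h => heQ.2 (h ▸ hpe.2)) hne (fun h => heQ.2 (h ▸ hp.2))
          hadj (hstar.cliques 0 hpe.2 hp.2 (fun h => hne (h.symm)))
    have hQeK : Qe ⊆ Vp k := by
      intro e he
      rcases eq_or_ne e e₀ with rfl | hne
      · exact he₀k
      have hadj : G.Adj e₀ e := adj_of_two hS hp₀.1 he₀.1.1 he.1.1
        (fun h => he₀.1.2 (h ▸ hp₀.2)) (fun h => he.1.2 (h ▸ hp₀.2)) hne.symm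
        (F1 e₀ he₀ p₀ hp₀) ((F1 e he p₀ hp₀).symm)
      rcases adj_mem_or hstar hk he₀k hadj with h' | h'
      · exact h'
      · exact absurd h' he.1.2
    have hPz : P ∩ Z = ∅ := by
      apply Set.eq_empty_iff_forall_notMem.mpr
      intro p hp
      exact simplicial_V0_no_outside hstar hp.1.2 hp.2 he₀.1.2 ((F1 e₀ he₀ p hp.1).symm)
    have hPC : P ⊆ Cset' G Vp k := by
      intro x hx
      have hxZ : x ∉ Z := fun h => (Set.eq_empty_iff_forall_notMem.mp hPz x ⟨hx, h⟩)
      refine ⟨?_, fun h => hxZ h.2⟩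
      rw [hXk]
      exact mem_closedNbhd_iff.mpr (Or.inr (F1 e₀ he₀ x hx))
    have hQeC : Qe ⊆ Cset G Vp k := fun e he =>
      ⟨mem_Xset_self hstar (hQeK he), hQsimp e he.1⟩
    have hQtY : Qt ⊆ Yset G Vp k := by
      rintro q ⟨hqQ, hqE⟩
      obtain ⟨m, hqm⟩ := hstar.covers q
      have hm0 : m ≠ 0 := by rintro rfl; exact hqQ.2 hqm
      have hXm := Xset_eq_closedNbhd hstar hm0 hqm
      have hqP : ∀ p ∈ P, ¬ G.Adj q p := fun p hp hadj => hqE ⟨hqQ, p, hp, hadj⟩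
      have hmk : m ≠ k := by
        rintro rfl
        have hp₀X : p₀ ∈ Xset G Vp m := by
          rw [hXk]
          exact mem_closedNbhd_iff.mpr (Or.inr (F1 e₀ he₀ p₀ hp₀))
        rw [hXm] at hp₀X
        rcases mem_closedNbhd_iff.mp hp₀X with rfl | h
        · exact hqQ.2 hp₀.2
        · exact hqP p₀ hp₀ h
      have hnadj_e₀q : ¬ G.Adj e₀ q := by
        intro h
        rcases adj_mem_or hstar hk he₀k h with h' | h'
        · exact Set.disjoint_left.mp (hstar.disjoint m k hmk) hqm h'
        · exact hqQ.2 h'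
      have hC'sub : Cset' G Vp m ⊆ Cset' G Vp k := by
        intro y hy
        have hyZ : y ∉ Z := fun h => hy.2 ⟨hy.1, h⟩
        have hyV0 : y ∈ Vp 0 := by
          by_contra h
          exact hyZ (simplicial_of_not_mem_V0 hstar h)
        have hyX : y ∈ closedNbhd G q := by rw [← hXm]; exact hy.1
        have hyq : G.Adj q y := by
          rcases mem_closedNbhd_iff.mp hyX with rfl | h
          · exact absurd hyV0 hqQ.2
          · exact h
        have hp₀y : p₀ ≠ y := fun h => hqP p₀ hp₀ (h ▸ hyq)
        have hadj_e₀y : G.Adj e₀ y := by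
          by_contra hne
          exact four_path_false hS he₀.1.1 hp₀.1 hqQ.1
            (F1 e₀ he₀ p₀ hp₀)
            (hstar.cliques 0 hp₀.2 hyV0 hp₀y)
            hyq.symm
            hne hnadj_e₀q
            (fun h => hqP p₀ hp₀ h.symm)
            (fun h => he₀.1.2 (h ▸ hyV0))
            (fun h => Set.disjoint_left.mp (hstar.disjoint m k hmk) hqm (h ▸ he₀k))
            (fun h => hqQ.2 (h ▸ hp₀.2))
        refine ⟨?_, fun h => hyZ h.2⟩
        rw [hXk]
        exact mem_closedNbhd_iff.mpr (Or.inr hadj_e₀y)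
      exact Set.mem_iUnion₂.mpr ⟨m, ⟨hmk, hC'sub⟩,
        mem_Cset hstar hqm (hQsimp q hqQ)⟩
    refine le_trans ?_ (Finset.le_sup' _ (Finset.mem_univ k))
    apply main_count G Vp S P Qe Qt k
    · ext v
      constructor
      · intro hv
        by_cases h0 : v ∈ Vp 0
        · exact Or.inl (Or.inl ⟨hv, h0⟩)
        · by_cases hqe : v ∈ Qe
          · exact Or.inl (Or.inr hqe)
          · exact Or.inr ⟨⟨hv, h0⟩, hqe⟩
      · rintro ((hv | hv) | hv)
        · exact hv.1
        · exact hv.1.1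
        · exact hv.1.1
    · exact Set.disjoint_left.mpr (fun x hx hx' => hx'.1.2 hx.2)
    · exact Set.disjoint_left.mpr (fun x hx hx' => hx'.1.2 hx.2)
    · exact Set.disjoint_sdiff_right
    · exact hPC
    · exact hQeC
    · exact hQtY
    · intro q hq w hadj hw
      exact hq.2 ⟨hq.1, ⟨w, hw, hadj⟩⟩
end

section
/- Let G be a finite simple graph, T an independent set of G, v ∈ T, and y ∉ T a vertex adjacent to v with N[y] ⊆ N[v]. Then T' = (T − {v}) ∪ {y} is an independent set of G and d(T') ≥ d(T). -/
open SimpleGraph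

variable {V : Type*}

/-- if `T` is independent, `v ∈ T`, `y ∉ T` is adjacent to `v` and
`N[y] ⊆ N[v]`, then `T' = (T − {v}) ∪ {y}` is independent and `d(T') ≥ d(T)`. -/
theorem statement13 [Fintype V] (G : SimpleGraph V) (T : Set V)
    (hT : IsIndepSet' G T) (v y : V) (hv : v ∈ T) (hy : y ∉ T)
    (hadj : G.Adj v y) (hN : closedNbhd G y ⊆ closedNbhd G v) :
    IsIndepSet' G ((T \ {v}) ∪ {y}) ∧
    indepDiff G T ≤ indepDiff G ((T \ {v}) ∪ {y}) := by
  classical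
  -- key fact: no vertex of T \ {v} is adjacent to y
  have key : ∀ u ∈ T, u ≠ v → ¬ G.Adj u y := by
    intro u hu huv hadj'
    have hu' : u ∈ closedNbhd G y := Set.mem_insert_iff.2 (Or.inr hadj'.symm)
    have := hN hu'
    rcases this with h | h
    · exact huv h
    · exact hT v hv u hu h
  have hindep : IsIndepSet' G ((T \ {v}) ∪ {y}) := by
    intro a ha b hb hab
    rcases ha with ⟨haT, hav⟩ | ha
    · rcases hb with ⟨hbT, hbv⟩ | hb
      · exact hT a haT b hbT hab
      · exact key a haT hav (hb ▸ hab)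
    · rcases hb with ⟨hbT, hbv⟩ | hb
      · exact key b hbT hbv ((ha ▸ hab).symm)
      · exact G.loopless.irrefl a ((ha.trans hb.symm) ▸ hab)
  refine ⟨hindep, ?_⟩
  set T' := (T \ {v}) ∪ {y} with hT'
  -- cardinalities
  have hyd : y ∉ T \ {v} := fun h => hy h.1
  have hcardT' : T'.ncard = T.ncard := by
    have h1 : T' = insert y (T \ {v}) := by
      rw [hT']; ext x; simp [or_comm]
    rw [h1, Set.ncard_insert_of_notMem hyd (Set.toFinite _),
      Set.ncard_diff_singleton_of_mem hv]
    have : 1 ≤ T.ncard := (Set.ncard_pos (Set.toFinite _)).2 ⟨v, hv⟩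
    omega
  have hyN : y ∈ nbhdSet G T := by
    simp only [nbhdSet, Set.mem_iUnion]
    exact ⟨v, hv, hadj⟩
  have hsub : nbhdSet G T' ⊆ insert v (nbhdSet G T \ {y}) := by
    intro w hw
    simp only [nbhdSet, Set.mem_iUnion] at hw
    obtain ⟨u, hu, hwu⟩ := hw
    rcases hu with ⟨huT, huv⟩ | hu
    · right
      refine ⟨Set.mem_iUnion₂.2 ⟨u, huT, hwu⟩, ?_⟩
      intro h
      exact key u huT huv (h ▸ hwu : G.Adj u y)
    · -- u = y, so w ∈ N(y) ⊆ N[v]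
      have hu' : u = y := hu
      have hw' : w ∈ closedNbhd G y := Set.mem_insert_iff.2 (Or.inr (hu' ▸ hwu))
      rcases hN hw' with h | h
      · exact Or.inl h
      · right
        refine ⟨Set.mem_iUnion₂.2 ⟨v, hv, h⟩, ?_⟩
        intro hwy
        have h1 : G.Adj y w := hu' ▸ hwu
        have h2 : w = y := hwy
        exact G.loopless.irrefl y (h2 ▸ h1)
  have hcardN : (nbhdSet G T').ncard ≤ (nbhdSet G T).ncard := by
    have h1 : (nbhdSet G T').ncard ≤ (insert v (nbhdSet G T \ {y})).ncard :=
      Set.ncard_le_ncard hsub (Set.toFinite _)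
    have h2 : (insert v (nbhdSet G T \ {y})).ncard ≤ (nbhdSet G T \ {y}).ncard + 1 :=
      Set.ncard_insert_le _ _
    have h3 : (nbhdSet G T \ {y}).ncard = (nbhdSet G T).ncard - 1 :=
      Set.ncard_diff_singleton_of_mem hyN
    have h4 : 1 ≤ (nbhdSet G T).ncard :=
      (Set.ncard_pos (Set.toFinite _)).2 ⟨y, hyN⟩
    omega
  simp only [indepDiff, hcardT']
  omega
end
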